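/- Let k be an infinite field, n a natural number, and a : Fin n → ℤ weights with a i ≠ 0 for all i. Let τ be a polynomial over k in the variables X 0, …, X (n−1) and an additional variable w (i.e. τ ∈ Polynomial (MvPolynomial (Fin n) k), with w the outer variable). Say τ is antidiagonally invariant if for every g ∈ kˣ, the k-algebra substitution sending X i to g^{a i} • X i (ℤ-power in kˣ) and w to g⁻¹ • w fixes τ. Assume τ is antidiagonally invariant and that the coefficient of w⁰ in τ has zero constant term (as a multivariate polynomial in the X i). Then for every x : Fin n → k such that either x i = 0 for all i with a i < 0, or x i = 0 for all i with a i > 0, the evaluation of τ at (x, 0) is zero. -/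
import Mathlib


/-- Over an infinite field `k`, with nonzero weights `a i`, let
`τ ∈ Polynomial (MvPolynomial (Fin n) k)` (outer variable `w`) be antidiagonally
invariant: for every `g ∈ kˣ` the `k`-algebra substitution `X i ↦ g ^ (a i) • X i`,
`w ↦ g⁻¹ • w` fixes `τ`.  Assume the coefficient of `w⁰` in `τ` has zero constant term.
Then `τ` vanishes at `(x, 0)` for every `x` with either `x i = 0` for all `i` with
`a i < 0`, or `x i = 0` for all `i` with `a i > 0`. -/
theorem invariant_section_vanishes_type_ii (k : Type*) [Field k] [Infinite k] (n : ℕ)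
    (a : Fin n → ℤ) (ha : ∀ i, a i ≠ 0)
    (τ : Polynomial (MvPolynomial (Fin n) k))
    (hinv : ∀ g : kˣ,
      Polynomial.eval₂
        ((Polynomial.C : MvPolynomial (Fin n) k →+* Polynomial (MvPolynomial (Fin n) k)).comp
          (MvPolynomial.aeval
            (fun i => ((g ^ a i : kˣ) : k) •
              (MvPolynomial.X i : MvPolynomial (Fin n) k))).toRingHom)
        (((g⁻¹ : kˣ) : k) • (Polynomial.X : Polynomial (MvPolynomial (Fin n) k))) τ = τ)
    (hconst : MvPolynomial.constantCoeff (τ.coeff 0) = 0)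
    (x : Fin n → k)
    (hx : (∀ i, a i < 0 → x i = 0) ∨ (∀ i, 0 < a i → x i = 0)) :
    Polynomial.eval₂ (MvPolynomial.eval x) 0 τ = 0 := by
  classical
  set p : MvPolynomial (Fin n) k := τ.coeff 0 with hp
  rw [Polynomial.eval₂_at_zero]
  -- key invariance consequence
  have key : ∀ g : kˣ,
      MvPolynomial.eval (fun i => ((g ^ a i : kˣ) : k) * x i) p = MvPolynomial.eval x p := by
    intro g
    have h := congrArg (Polynomial.eval₂RingHom (MvPolynomial.eval x) (0 : k)) (hinv g)
    rw [Polynomial.hom_eval₂] at h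
    rw [Polynomial.coe_eval₂RingHom, Algebra.smul_def, Polynomial.eval₂_mul, Polynomial.eval₂_X,
      mul_zero, Polynomial.eval₂_at_zero, Polynomial.eval₂_at_zero] at h
    rw [RingHom.comp_apply, RingHom.comp_apply, Polynomial.coe_eval₂RingHom,
      Polynomial.eval₂_C] at h
    rw [← h]
    rw [AlgHom.toRingHom_eq_coe, RingHom.coe_coe, MvPolynomial.aeval_def,
      MvPolynomial.algebraMap_eq, MvPolynomial.eval_eval₂]
    have hcomp : (MvPolynomial.eval x).comp (MvPolynomial.C (σ := Fin n)) = RingHom.id k := by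
      ext c; simp
    rw [hcomp, MvPolynomial.eval₂_id]
    refine congrArg (fun v => MvPolynomial.eval v p) (funext fun i => ?_)
    simp [MvPolynomial.smul_eq_C_mul]
  set c : k := MvPolynomial.eval x p with hc
  set Q : Polynomial k :=
    MvPolynomial.aeval (fun i => Polynomial.C (x i) * Polynomial.X ^ (a i).natAbs) p with hQ
  have hQeval : ∀ t : k,
      Q.eval t = MvPolynomial.eval (fun i => x i * t ^ (a i).natAbs) p := by
    intro t
    rw [hQ, MvPolynomial.aeval_def, Polynomial.algebraMap_eq, ← Polynomial.coe_evalRingHom,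
      MvPolynomial.eval₂_comp_left (Polynomial.evalRingHom t)]
    have hcomp : (Polynomial.evalRingHom t).comp (Polynomial.C (R := k)) = RingHom.id k := by
      ext c; simp
    rw [hcomp, MvPolynomial.eval₂_id]
    refine congrArg (fun v => MvPolynomial.eval v p) (funext fun i => ?_)
    simp
  -- on units, Q.eval agrees with c
  have hunit : ∀ t : kˣ, Q.eval (t : k) = c := by
    intro t
    rw [hQeval]
    rcases hx with hneg | hpos
    · rw [← key t]
      refine congrArg (fun v => MvPolynomial.eval v p) (funext fun i => ?_)
      rcases (ha i).lt_or_gt with hlt | hgt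
      · rw [hneg i hlt, mul_zero, zero_mul]
      · rw [Units.val_zpow_eq_zpow_val, mul_comm]
        congr 1
        rw [← zpow_natCast, Int.natAbs_of_nonneg hgt.le]
    · rw [← key t⁻¹]
      refine congrArg (fun v => MvPolynomial.eval v p) (funext fun i => ?_)
      rcases (ha i).lt_or_gt with hlt | hgt
      · have hval : ((t⁻¹ ^ a i : kˣ) : k) = (t : k) ^ (a i).natAbs := by
          rw [Units.val_zpow_eq_zpow_val, Units.val_inv_eq_inv_val, inv_zpow',
            show -a i = ((a i).natAbs : ℤ) by omega, zpow_natCast]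
        rw [hval, mul_comm]
      · rw [hpos i hgt, mul_zero, zero_mul]
  -- Q is the constant polynomial c
  have hQc : Q = Polynomial.C c := by
    apply Polynomial.eq_of_infinite_eval_eq
    apply Set.Infinite.mono (s := {y : k | y ≠ 0})
    · intro y hy
      simp only [Set.mem_setOf_eq] at hy ⊢
      rw [Polynomial.eval_C]
      exact hunit (Units.mk0 y hy)
    · have h' := (Set.finite_singleton (0 : k)).infinite_compl
      have he : ({(0 : k)}ᶜ : Set k) = {y : k | y ≠ 0} := by
        ext y; simp
      rwa [he] at h'
  -- evaluate at 0
  have h0 : Q.eval 0 = c := by rw [hQc, Polynomial.eval_C]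
  rw [hQeval 0] at h0
  have hz : (fun i => x i * (0 : k) ^ (a i).natAbs) = fun _ => (0 : k) := by
    funext i
    rw [zero_pow (by simpa using ha i), mul_zero]
  rw [hz] at h0
  rw [← h0]
  rw [show (MvPolynomial.eval (fun _ => (0:k))) p
      = MvPolynomial.eval₂ (RingHom.id k) (fun _ => (0:k)) p from rfl,
    MvPolynomial.eval₂_zero'_apply, hconst, RingHom.id_apply]
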